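/- arXiv:1812.05593 — 7 statements merged into one kernel-verified Lean document; each statement's English description precedes it below -/
import Mathlib

section
/- If ζ = (σ ≤ τ₀ ≥ σ₀ ≤ ⋯ ≤ τ_k ≥ σ_k ≤ τ) is a W-zigzag in which every face relation (forward and backward) lies in W⁺, then ζ represents an isomorphism in the localization Fc_W(M), with inverse represented by the reversed zigzag (τ ≤ τ ≥ σ_k ≤ τ_k ≥ ⋯ ≤ τ₀ ≥ σ ≤ σ). -/
open CategoryTheory

variable {M : Type} [PartialOrder M]

/-- A relation on a poset, viewed as a morphism property on its face-poset category. -/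
def mp (W : M → M → Prop) : MorphismProperty M := fun σ τ _ => W σ τ

/-- A `W`-zigzag in the face poset: an alternating sequence of forward face relations
and backward face relations, where backward relations must lie in
`W⁺ = W ∪ {identities}`. -/
inductive Zig (W : M → M → Prop) : M → M → Type
  | nil (σ : M) : Zig W σ σ
  | fwd {σ τ ν : M} (h : σ ≤ τ) (rest : Zig W τ ν) : Zig W σ ν
  | bwd {σ τ ν : M} (h : τ ≤ σ) (hw : W τ σ ∨ τ = σ) (rest : Zig W τ ν) : Zig W σ ν

/-- The inverse, in the localization, of a face relation lying in `W⁺`. -/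
noncomputable def backHom (W : M → M → Prop) {a b : M} (h : a ≤ b) (hw : W a b ∨ a = b) :
    (mp W).Q.obj b ⟶ (mp W).Q.obj a :=
  letI := Classical.dec (W a b)
  if hab : W a b then
    letI : IsIso ((mp W).Q.map (homOfLE h)) := (mp W).Q_inverts _ hab
    inv ((mp W).Q.map (homOfLE h))
  else
    (mp W).Q.map (homOfLE (le_of_eq (hw.resolve_left hab).symm))

/-- The morphism in the localization `Fc_W(M)` represented by a `W`-zigzag. -/
noncomputable def Zig.eval {W : M → M → Prop} :
    ∀ {σ τ : M}, Zig W σ τ → ((mp W).Q.obj σ ⟶ (mp W).Q.obj τ)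
  | _, _, .nil _ => 𝟙 _
  | _, _, .fwd h rest => (mp W).Q.map (homOfLE h) ≫ rest.eval
  | _, _, .bwd h hw rest => backHom W h hw ≫ rest.eval

/-- All forward face relations of a zigzag lie in `W⁺ = W ∪ {identities}`. -/
def Zig.allFwd {W : M → M → Prop} : ∀ {σ τ : M}, Zig W σ τ → Prop
  | _, _, .nil _ => True
  | _, _, .fwd (σ := a) (τ := b) _ rest => (W a b ∨ a = b) ∧ rest.allFwd
  | _, _, .bwd _ _ rest => rest.allFwd

/-- Concatenation of zigzags. -/
def Zig.comp {W : M → M → Prop} : ∀ {σ τ ν : M}, Zig W σ τ → Zig W τ ν → Zig W σ ν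
  | _, _, _, .nil _, z => z
  | _, _, _, .fwd h rest, z => .fwd h (rest.comp z)
  | _, _, _, .bwd h hw rest, z => .bwd h hw (rest.comp z)

/-- Reversal of a zigzag all of whose forward relations lie in `W⁺`. -/
def Zig.rev {W : M → M → Prop} :
    ∀ {σ τ : M} (z : Zig W σ τ), z.allFwd → Zig W τ σ
  | _, _, .nil a, _ => .nil a
  | _, _, .fwd h rest, hf => (rest.rev hf.2).comp (.bwd h hf.1 (.nil _))
  | _, _, .bwd h _ rest, hf => (rest.rev hf).comp (.fwd h (.nil _))


lemma fwd_bwd (W : M → M → Prop) {a b : M} (h : a ≤ b) (hw : W a b ∨ a = b) :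
    (mp W).Q.map (homOfLE h) ≫ backHom W h hw = 𝟙 _ := by
  unfold backHom
  split
  · letI : IsIso ((mp W).Q.map (homOfLE h)) := (mp W).Q_inverts _ (by assumption)
    exact IsIso.hom_inv_id _
  · rw [← Functor.map_comp, homOfLE_comp]
    have : a = b := hw.resolve_left (by assumption)
    subst this
    simp

lemma bwd_fwd (W : M → M → Prop) {a b : M} (h : a ≤ b) (hw : W a b ∨ a = b) :
    backHom W h hw ≫ (mp W).Q.map (homOfLE h) = 𝟙 _ := by
  unfold backHom
  split
  · letI : IsIso ((mp W).Q.map (homOfLE h)) := (mp W).Q_inverts _ (by assumption)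
    exact IsIso.inv_hom_id _
  · rw [← Functor.map_comp, homOfLE_comp]
    have : a = b := hw.resolve_left (by assumption)
    subst this
    simp

lemma Zig.eval_comp {W : M → M → Prop} :
    ∀ {σ τ ν : M} (z : Zig W σ τ) (w : Zig W τ ν),
      (z.comp w).eval = z.eval ≫ w.eval := by
  intro σ τ ν z w
  induction z with
  | nil => simp [Zig.comp, Zig.eval]
  | fwd h rest ih => simp [Zig.comp, Zig.eval, ih]
  | bwd h hw rest ih => simp [Zig.comp, Zig.eval, ih]

/-- a `W`-zigzag all of whose face relations (forward and backward) lie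
in `W⁺` represents an isomorphism in the localization `Fc_W(M)`, with inverse
represented by the reversed zigzag. -/
theorem allW_zigzag_iso (W : M → M → Prop)
    (hface : ∀ σ τ, W σ τ → σ ≤ τ)
    (hclosed : ∀ σ τ ν, W σ τ → W τ ν → W σ ν)
    {σ τ : M} (ζ : Zig W σ τ) (hf : ζ.allFwd) :
    ζ.eval ≫ (ζ.rev hf).eval = 𝟙 _ ∧ (ζ.rev hf).eval ≫ ζ.eval = 𝟙 _ := by
  induction ζ with
  | nil =>
    simp [Zig.eval, Zig.rev]
  | fwd h rest ih =>
    obtain ⟨hw, hf⟩ := hf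
    obtain ⟨ih1, ih2⟩ := ih hf
    constructor
    · show ((mp W).Q.map (homOfLE h) ≫ rest.eval) ≫
        ((rest.rev hf).comp (.bwd h hw (.nil _))).eval = 𝟙 _
      rw [Zig.eval_comp]
      simp only [Zig.eval, Category.comp_id, Category.assoc]
      rw [← Category.assoc rest.eval, ih1, Category.id_comp, fwd_bwd]
    · show ((rest.rev hf).comp (.bwd h hw (.nil _))).eval ≫
        ((mp W).Q.map (homOfLE h) ≫ rest.eval) = 𝟙 _
      rw [Zig.eval_comp]
      simp only [Zig.eval, Category.comp_id, Category.assoc]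
      rw [← Category.assoc (backHom W h hw), bwd_fwd, Category.id_comp, ih2]
  | bwd h hw rest ih =>
    obtain ⟨ih1, ih2⟩ := ih hf
    constructor
    · show (backHom W h hw ≫ rest.eval) ≫
        ((rest.rev hf).comp (.fwd h (.nil _))).eval = 𝟙 _
      rw [Zig.eval_comp]
      simp only [Zig.eval, Category.comp_id, Category.assoc]
      rw [← Category.assoc rest.eval, ih1, Category.id_comp, bwd_fwd]
    · show ((rest.rev hf).comp (.fwd h (.nil _))).eval ≫
        (backHom W h hw ≫ rest.eval) = 𝟙 _
      rw [Zig.eval_comp]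
      simp only [Zig.eval, Category.comp_id, Category.assoc]
      rw [← Category.assoc ((mp W).Q.map (homOfLE h)), fwd_bwd, Category.id_comp, ih2]
end

section
/- Let S be the isomorphism class in Fc_W(M) of an m-dimensional simplex σ of an m-dimensional simplicial complex M, where W is defined from a bisheaf F as above. Then S is upward closed: if τ ∈ S and τ ≤ τ', then τ' ∈ S. -/
open CategoryTheory

structure Bisheaf (M : Type) [PartialOrder M] where
  shf : M ⥤ AddCommGrpCat
  csh : Mᵒᵖ ⥤ AddCommGrpCat
  F : ∀ σ : M, shf.obj σ ⟶ csh.obj (Opposite.op σ)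
  compat : ∀ {σ τ : M} (h : σ ≤ τ),
    shf.map (homOfLE h) ≫ F τ ≫ csh.map (homOfLE h).op = F σ

variable {M : Type} [PartialOrder M]

/-- The set `E` of face relations to which the bisheaf assigns isomorphisms. -/
def Bisheaf.E (B : Bisheaf M) (σ τ : M) : Prop :=
  ∃ h : σ ≤ τ, IsIso (B.shf.map (homOfLE h)) ∧ IsIso (B.csh.map (homOfLE h).op)

/-- The collection `W = {(σ ≤ τ) ∈ E | σ ∈ U}`, where
`U = {σ | (σ ≤ ρ) ∈ E for every ρ in the open star of σ}`. -/
def Bisheaf.W (B : Bisheaf M) (σ τ : M) : Prop :=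
  σ ≤ τ ∧ ∀ ρ, σ ≤ ρ → B.E σ ρ

/-- Two simplices are isomorphic in the localization `Fc_W(M)` of the face poset. -/
def isoIn (W : M → M → Prop) (σ τ : M) : Prop :=
  Nonempty ((mp W).Q.obj σ ≅ (mp W).Q.obj τ)

/-- copy of `M` with the preorder generated by `≤` and reversed `V`-arrows. -/
structure Cl (V : M → M → Prop) where pt : M

def clRel (V : M → M → Prop) (a b : M) : Prop := a ≤ b ∨ V b a

instance (V : M → M → Prop) : Preorder (Cl V) where
  le a b := Relation.ReflTransGen (clRel V) a.pt b.pt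
  le_refl _ := Relation.ReflTransGen.refl
  le_trans _ _ _ h h' := Relation.ReflTransGen.trans h h'

lemma Cl.le_def {V : M → M → Prop} {a b : M} :
    ((⟨a⟩ : Cl V) ≤ ⟨b⟩) ↔ Relation.ReflTransGen (clRel V) a b := ⟨fun h => h, fun h => h⟩

def clFunctor (V : M → M → Prop) : M ⥤ Cl V where
  obj a := ⟨a⟩
  map {a b} f := homOfLE (Cl.le_def.mpr (Relation.ReflTransGen.single (Or.inl (leOfHom f))))
  map_id _ := Subsingleton.elim _ _
  map_comp _ _ := Subsingleton.elim _ _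

lemma clFunctor_inverts (V : M → M → Prop) : (mp V).IsInvertedBy (clFunctor V) := by
  intro a b f hf
  exact ⟨homOfLE (Cl.le_def.mpr (Relation.ReflTransGen.single (Or.inr hf))),
    Subsingleton.elim _ _, Subsingleton.elim _ _⟩

/-- An iso in the localization yields zigzag relations both ways. -/
lemma isoIn_to_reflTransGen {V : M → M → Prop} {a b : M} (h : isoIn V a b) :
    Relation.ReflTransGen (clRel V) a b ∧ Relation.ReflTransGen (clRel V) b a := by
  obtain ⟨i⟩ := h
  let L := Localization.Construction.lift (clFunctor V) (clFunctor_inverts V)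
  have hfac : (mp V).Q ⋙ L = clFunctor V := Localization.Construction.fac _ _
  have e1 : L.obj ((mp V).Q.obj a) = (⟨a⟩ : Cl V) := Functor.congr_obj hfac a
  have e2 : L.obj ((mp V).Q.obj b) = (⟨b⟩ : Cl V) := Functor.congr_obj hfac b
  have j : (⟨a⟩ : Cl V) ≅ (⟨b⟩ : Cl V) :=
    (eqToIso e1).symm ≪≫ L.mapIso i ≪≫ eqToIso e2
  exact ⟨Cl.le_def.mp (leOfHom j.hom), Cl.le_def.mp (leOfHom j.inv)⟩

/-- The equivalence closure of `V` yields isomorphism in the localization. -/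
lemma eqvGen_to_isoIn {V : M → M → Prop} (hle : ∀ a b, V a b → a ≤ b)
    {a b : M} (h : Relation.EqvGen V a b) : isoIn V a b := by
  induction h with
  | rel x y hxy =>
      have : IsIso ((mp V).Q.map (homOfLE (hle x y hxy))) :=
        (mp V).Q_inverts _ hxy
      exact ⟨asIso ((mp V).Q.map (homOfLE (hle x y hxy)))⟩
  | refl x => exact ⟨Iso.refl _⟩
  | symm x y _ ih => exact ⟨ih.some.symm⟩
  | trans x y z _ _ ih ih' => exact ⟨ih.some.trans ih'.some⟩

/-- Zigzags from a maximal element stay in its `EqvGen`-class, with a witness. -/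
lemma zigzag_from_max {V : M → M → Prop} (hle : ∀ a b, V a b → a ≤ b)
    (hup : ∀ a b c, V a b → a ≤ c → V a c) {σ : M}
    (hmax : ∀ x, σ ≤ x → x = σ) {ρ : M}
    (h : Relation.ReflTransGen (clRel V) σ ρ) :
    Relation.EqvGen V σ ρ ∧ (ρ = σ ∨ ∃ u, V u ρ) := by
  induction h with
  | refl => exact ⟨Relation.EqvGen.refl _, Or.inl rfl⟩
  | tail _ hbc ih =>
      rename_i b c _
      rcases hbc with hbc | hcb
      · rcases ih.2 with hbσ | ⟨u, hub⟩
        · have hcσ : c = σ := hmax c (hbσ ▸ hbc)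
          subst hcσ
          exact ⟨Relation.EqvGen.refl _, Or.inl rfl⟩
        · have huc : V u c := hup u b c hub (le_trans (hle u b hub) hbc)
          exact ⟨(ih.1.trans _ _ _ ((Relation.EqvGen.rel _ _ hub).symm _ _)).trans _ _ _
            (Relation.EqvGen.rel _ _ huc), Or.inr ⟨u, huc⟩⟩
      · have hcc : V c c := hup c b c hcb (le_refl c)
        exact ⟨ih.1.trans _ _ _ ((Relation.EqvGen.rel _ _ hcb).symm _ _),
          Or.inr ⟨c, hcc⟩⟩

/-- the isomorphism class `S` in `Fc_W(M)` of a top-dimensional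
(`m`-dimensional) simplex `σ` of an `m`-dimensional simplicial complex `M` is
upward closed: if `τ ∈ S` and `τ ≤ τ'` then `τ' ∈ S`. -/
theorem top_iso_class_upward_closed (B : Bisheaf M) (dim : M → ℕ) (m : ℕ)
    (hstrict : ∀ σ τ : M, σ < τ → dim σ < dim τ)
    (hbound : ∀ σ : M, dim σ ≤ m)
    {σ : M} (hσ : dim σ = m)
    {τ τ' : M} (hτ : isoIn B.W τ σ) (h : τ ≤ τ') :
    isoIn B.W τ' σ := by
  have hle : ∀ a b, B.W a b → a ≤ b := fun a b hab => hab.1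
  have hup : ∀ a b c, B.W a b → a ≤ c → B.W a c := fun a b c hab hac => ⟨hac, hab.2⟩
  have hmax : ∀ x, σ ≤ x → x = σ := by
    intro x hx
    rcases hx.lt_or_eq with hlt | he
    · exact absurd (hbound x) (not_le.mpr (hσ ▸ hstrict σ x hlt))
    · exact he.symm
  have hστ : Relation.ReflTransGen (clRel B.W) σ τ := (isoIn_to_reflTransGen hτ).2
  have hστ' : Relation.ReflTransGen (clRel B.W) σ τ' := hστ.tail (Or.inl h)
  have := (zigzag_from_max hle hup hmax hστ').1
  exact ⟨(eqvGen_to_isoIn hle this).some.symm⟩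
end

section
/- If two simplices τ ≤ τ' both lie in the isomorphism class S (in Fc_W(M)) of an m-dimensional simplex σ of M, then the restriction map F̂(τ ≤ τ') and the extension map F̌(τ ≤ τ') are both isomorphisms. -/
open CategoryTheory

variable {M : Type} [PartialOrder M]

/-- `σ` is in `U`: every coface relation of `σ` is in `E`. -/
def Bisheaf.good (B : Bisheaf M) (σ : M) : Prop := ∀ ρ, σ ≤ ρ → B.E σ ρ

lemma Bisheaf.good_mono (B : Bisheaf M) : Monotone B.good := by
  intro σ τ hst hgood ρ hτρ
  obtain ⟨_, h1s, h1c⟩ := hgood τ hst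
  obtain ⟨_, h2s, h2c⟩ := hgood ρ (hst.trans hτρ)
  refine ⟨hτρ, ?_, ?_⟩
  · have : B.shf.map (homOfLE (hst.trans hτρ)) =
      B.shf.map (homOfLE hst) ≫ B.shf.map (homOfLE hτρ) := by
      rw [← Functor.map_comp]; rfl
    rw [this] at h2s
    exact IsIso.of_isIso_comp_left (B.shf.map (homOfLE hst)) _
  · have : B.csh.map (homOfLE (hst.trans hτρ)).op =
      B.csh.map (homOfLE hτρ).op ≫ B.csh.map (homOfLE hst).op := by
      rw [← Functor.map_comp]; rfl
    rw [this] at h2c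
    exact IsIso.of_isIso_comp_right _ (B.csh.map (homOfLE hst).op)

/-- `good` as a functor to `Prop`. -/
def Bisheaf.goodFunctor (B : Bisheaf M) : M ⥤ Prop := (B.good_mono).functor

lemma Bisheaf.goodFunctor_inverts (B : Bisheaf M) :
    (mp B.W).IsInvertedBy B.goodFunctor := by
  intro σ τ f hf
  obtain ⟨hle, hU⟩ := hf
  have h1 : B.good σ ≤ B.good τ := B.good_mono hle
  have h2 : B.good τ ≤ B.good σ := fun _ => hU
  exact ⟨homOfLE h2, Subsingleton.elim _ _, Subsingleton.elim _ _⟩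

lemma Bisheaf.good_of_isoIn (B : Bisheaf M) {τ σ : M} (h : isoIn B.W τ σ)
    (hσ : B.good σ) : B.good τ := by
  obtain ⟨e⟩ := h
  let L := Localization.Construction.lift B.goodFunctor B.goodFunctor_inverts
  have hfac : (mp B.W).Q ⋙ L = B.goodFunctor :=
    Localization.Construction.fac _ _
  have e' : L.obj ((mp B.W).Q.obj τ) ≅ L.obj ((mp B.W).Q.obj σ) := L.mapIso e
  have e2 : B.goodFunctor.obj τ ≅ B.goodFunctor.obj σ := by
    rw [← hfac]; exact e'
  exact leOfHom e2.inv hσ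

/-- if `τ ≤ τ'` both lie in the isomorphism class `S` (in `Fc_W(M)`)
of an `m`-dimensional simplex `σ` of the `m`-dimensional complex `M`, then the
restriction map `F̂(τ ≤ τ')` and the extension map `F̌(τ ≤ τ')` are isomorphisms. -/
theorem constructible_on_top_class (B : Bisheaf M) (dim : M → ℕ) (m : ℕ)
    (hstrict : ∀ σ τ : M, σ < τ → dim σ < dim τ)
    (hbound : ∀ σ : M, dim σ ≤ m)
    {σ : M} (hσ : dim σ = m)
    {τ τ' : M} (hτ : isoIn B.W τ σ) (hτ' : isoIn B.W τ' σ) (h : τ ≤ τ') :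
    IsIso (B.shf.map (homOfLE h)) ∧ IsIso (B.csh.map (homOfLE h).op) := by
  have hσgood : B.good σ := by
    intro ρ hρ
    have heq : ρ = σ := by
      rcases eq_or_lt_of_le hρ with rfl | hlt
      · rfl
      · exact absurd (hstrict _ _ hlt) (by have := hbound ρ; omega)
    subst heq
    refine ⟨le_rfl, ?_, ?_⟩
    · have : homOfLE (le_refl ρ) = 𝟙 ρ := rfl
      rw [this, B.shf.map_id]; infer_instance
    · have : (homOfLE (le_refl ρ)).op = 𝟙 (Opposite.op ρ) := rfl
      rw [this, B.csh.map_id]; infer_instance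
  have hτg := B.good_of_isoIn hτ hσgood
  obtain ⟨_, hs, hc⟩ := hτg τ' h
  exact ⟨hs, hc⟩
end

section
/- Every simplex τ lying in an m-dimensional stratum of any F-stratification of an m-dimensional simplicial complex M is isomorphic, in the localization Fc_W(M), to some m-dimensional simplex of M. -/
open CategoryTheory

variable {M : Type} [PartialOrder M]

/-- An `F`-stratification of `M`, presented by a labelling `lbl : M → Λ` of simplices
by strata and a dimension `sdim` for each stratum.  The axioms are:
connectedness of strata (via zigzags of face relations within a stratum),
the dimension axiom (the maximal dimension of simplices in a stratum is its dimension),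
the frontier axiom (adjacency of strata is graded by dimension, with equality of
dimensions only within a stratum), and constructibility (the bisheaf assigns
isomorphisms to face relations within a stratum). -/
structure IsFStrat (B : Bisheaf M) (dim : M → ℕ) {Λ : Type} (lbl : M → Λ)
    (sdim : Λ → ℕ) : Prop where
  connected : ∀ σ τ : M, lbl σ = lbl τ →
    Relation.ReflTransGen (fun a b => lbl a = lbl σ ∧ lbl b = lbl σ ∧ (a ≤ b ∨ b ≤ a)) σ τ
  dim_le : ∀ σ : M, dim σ ≤ sdim (lbl σ)
  dim_attained : ∀ σ : M, ∃ τ : M, lbl τ = lbl σ ∧ dim τ = sdim (lbl σ)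
  frontier : ∀ σ τ : M, σ ≤ τ → lbl σ = lbl τ ∨ sdim (lbl σ) < sdim (lbl τ)
  constructible : ∀ (σ τ : M) (h : σ ≤ τ), lbl σ = lbl τ →
    IsIso (B.shf.map (homOfLE h)) ∧ IsIso (B.csh.map (homOfLE h).op)

/-- every simplex `τ` lying in an `m`-dimensional stratum of any
`F`-stratification of the `m`-dimensional complex `M` is isomorphic, in the
localization `Fc_W(M)`, to some `m`-dimensional simplex of `M`. -/
theorem top_stratum_iso_to_top_simplex (B : Bisheaf M) (dim : M → ℕ) (m : ℕ)
    (hstrict : ∀ σ τ : M, σ < τ → dim σ < dim τ)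
    (hbound : ∀ σ : M, dim σ ≤ m)
    {Λ : Type} {lbl : M → Λ} {sdim : Λ → ℕ}
    (hstrat : IsFStrat B dim lbl sdim)
    {τ : M} (hτ : sdim (lbl τ) = m) :
    ∃ σ : M, dim σ = m ∧ isoIn B.W τ σ := by
  obtain ⟨σ, hlσ, hdσ⟩ := hstrat.dim_attained τ
  refine ⟨σ, by rw [hdσ, hτ], ?_⟩
  have key : ∀ a b : M, lbl a = lbl τ → a ≤ b → B.W a b := by
    intro a b hla hab
    refine ⟨hab, fun ρ hρ => ?_⟩
    have hlaρ : lbl a = lbl ρ := by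
      rcases hstrat.frontier a ρ hρ with h | h
      · exact h
      · exfalso
        obtain ⟨t, ht, hdt⟩ := hstrat.dim_attained ρ
        have h1 : sdim (lbl ρ) ≤ m := hdt ▸ hbound t
        have h2 : sdim (lbl a) = m := by rw [hla, hτ]
        omega
    exact ⟨hρ, hstrat.constructible a ρ hρ hlaρ⟩
  have step : ∀ a b : M, lbl a = lbl τ → lbl b = lbl τ → (a ≤ b ∨ b ≤ a) →
      Nonempty ((mp B.W).Q.obj a ≅ (mp B.W).Q.obj b) := by
    intro a b ha hb hab
    rcases hab with h | h
    · have := Localization.inverts (mp B.W).Q (mp B.W) (homOfLE h) (key a b ha h)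
      exact ⟨asIso ((mp B.W).Q.map (homOfLE h))⟩
    · have := Localization.inverts (mp B.W).Q (mp B.W) (homOfLE h) (key b a hb h)
      exact ⟨(asIso ((mp B.W).Q.map (homOfLE h))).symm⟩
  have main : ∀ b : M,
      Relation.ReflTransGen (fun a b => lbl a = lbl τ ∧ lbl b = lbl τ ∧ (a ≤ b ∨ b ≤ a)) τ b →
      Nonempty ((mp B.W).Q.obj τ ≅ (mp B.W).Q.obj b) := by
    intro b h
    induction h with
    | refl => exact ⟨Iso.refl _⟩
    | tail h1 h2 ih =>
      obtain ⟨e⟩ := ih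
      obtain ⟨e2⟩ := step _ _ h2.1 h2.2.1 h2.2.2
      exact ⟨e.trans e2⟩
  exact main σ (hstrat.connected τ σ hlσ.symm)
end

section
/- In the iterative construction of the canonical stratification, if M_{d+1} is a simplicial subcomplex of M of dimension at most d+1, then M_d — obtained by deleting from M_{d+1} all simplices isomorphic in Fc_{W_{d+1}}(M) to some (d+1)-simplex — is a simplicial subcomplex of dimension at most d. Equivalently, the deleted set M_{d+1} − M_d contains every (d+1)-simplex of M_{d+1} and is upward closed in the face poset of M_{d+1}. -/
open CategoryTheory

variable {M : Type} [PartialOrder M]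

/-- `U` relative to a subcomplex `A`: simplices of `A` all of whose face relations
within the open star in `A` lie in `E`. -/
def Uof (E : M → M → Prop) (A : Set M) : Set M :=
  {σ | σ ∈ A ∧ ∀ τ ∈ A, σ ≤ τ → E σ τ}

/-- Enlarge a collection of face relations by all relations out of members of
`Uof E A` into the open star within `A`. -/
def Wadd (E : M → M → Prop) (A : Set M) (Wp : M → M → Prop) : M → M → Prop :=
  fun σ τ => Wp σ τ ∨ (σ ∈ Uof E A ∧ τ ∈ A ∧ σ ≤ τ)

/-- One step of the iterative construction: delete from `P.1` all simplices
isomorphic in the localization about `P.2` to a `(d+1)`-dimensional simplex. -/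
def stepM (dim : M → ℕ) (P : Set M × (M → M → Prop)) (d : ℕ) : Set M :=
  {σ | σ ∈ P.1 ∧ ¬ ∃ τ : M, dim τ = d + 1 ∧ isoIn P.2 σ τ}

/-- One step `(M_{d+1}, W_{d+1}) ↦ (M_d, W_d)` of the iterative construction. -/
def step (E : M → M → Prop) (dim : M → ℕ) (P : Set M × (M → M → Prop)) (d : ℕ) :
    Set M × (M → M → Prop) :=
  (stepM dim P d, Wadd E (stepM dim P d) P.2)

/-- The iterative construction, indexed by the number `j` of steps performed:
`seq E dim m j = (M_{m-j}, W_{m-j})`, starting from `(M_m, W_m) = (M, W)`. -/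
def seq (E : M → M → Prop) (dim : M → ℕ) (m : ℕ) : ℕ → Set M × (M → M → Prop)
  | 0 => (Set.univ, Wadd E Set.univ (fun _ _ => False))
  | j + 1 => step E dim (seq E dim m j) (m - (j + 1))

/-- The subcomplex `M_d` of the iterative construction. -/
def Mseq (B : Bisheaf M) (dim : M → ℕ) (m d : ℕ) : Set M := (seq B.E dim m (m - d)).1

/-- The collection `W_d` of face relations of the iterative construction. -/
def Wseq (B : Bisheaf M) (dim : M → ℕ) (m d : ℕ) : M → M → Prop := (seq B.E dim m (m - d)).2

/-! ### Auxiliary material -/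

/-- A zigzag step: either go up one step in the face poset, or go down along a
`W`-arrow (to its source). -/
def Zstep (W : M → M → Prop) (x y : M) : Prop := x ≤ y ∨ W y x

/-- Type synonym for `M`, to be equipped with the preorder reflection of the
localization at `W`. -/
def Ztype (M : Type) [PartialOrder M] (W : M → M → Prop) : Type := M

instance ZtypePreorder (W : M → M → Prop) : Preorder (Ztype M W) where
  le a b := Relation.ReflTransGen (Zstep W) a b
  le_refl a := Relation.ReflTransGen.refl
  le_trans a b c h1 h2 := Relation.ReflTransGen.trans h1 h2

/-- The identity on objects, viewed as mapping into `Ztype M W`. -/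
def Zobj (W : M → M → Prop) (x : M) : Ztype M W := x

/-- Convert a zigzag into a morphism of `Ztype M W`. -/
def Zhom (W : M → M → Prop) {x y : M} (h : Relation.ReflTransGen (Zstep W) x y) :
    Zobj W x ⟶ Zobj W y := homOfLE h

/-- Convert a morphism of `Ztype M W` into a zigzag. -/
lemma Zle (W : M → M → Prop) {x y : M} (f : Zobj W x ⟶ Zobj W y) :
    Relation.ReflTransGen (Zstep W) x y := leOfHom f

/-- The canonical functor from the face poset to its zigzag preorder reflection. -/
def Zfun (W : M → M → Prop) : M ⥤ Ztype M W where
  obj x := Zobj W x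
  map {x y} f := Zhom W (Relation.ReflTransGen.single (Or.inl (leOfHom f)))
  map_id _ := Subsingleton.elim _ _
  map_comp _ _ := Subsingleton.elim _ _

lemma Zinv (W : M → M → Prop) : (mp W).IsInvertedBy (Zfun W) := by
  intro x y f hf
  exact ⟨Zhom W (Relation.ReflTransGen.single (Or.inr hf)),
    Subsingleton.elim _ _, Subsingleton.elim _ _⟩

/-- Isomorphism in the localization yields a zigzag in the face poset. -/
lemma isoIn_zigzag {W : M → M → Prop} {σ τ : M} (h : isoIn W σ τ) :
    Relation.ReflTransGen (Zstep W) τ σ := by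
  obtain ⟨e⟩ := h
  have f := (Localization.Construction.lift (Zfun W) (Zinv W)).map e.inv
  exact Zle W (show Zobj W τ ⟶ Zobj W σ from f)

/-- Extract from a zigzag from `τ` to `σ` either a direct face relation, or a
`W`-arrow whose source lies below `σ`. -/
lemma zig_extract {W : M → M → Prop} {τ σ : M}
    (h : Relation.ReflTransGen (Zstep W) τ σ) :
    τ ≤ σ ∨ ∃ a b, W a b ∧ a ≤ σ := by
  induction h with
  | refl => exact Or.inl le_rfl
  | tail h1 h2 ih =>
    rcases h2 with h2 | h2
    · rcases ih with ih | ⟨a, b, hW, ha⟩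
      · exact Or.inl (ih.trans h2)
      · exact Or.inr ⟨a, b, hW, ha.trans h2⟩
    · exact Or.inr ⟨_, _, h2, le_rfl⟩

lemma seq_fst_succ (E : M → M → Prop) (dim : M → ℕ) (m j : ℕ) :
    (seq E dim m (j + 1)).1 ⊆ (seq E dim m j).1 := fun _ hx => hx.1

lemma seq_fst_mono (E : M → M → Prop) (dim : M → ℕ) (m : ℕ) {i j : ℕ} (hij : i ≤ j) :
    (seq E dim m j).1 ⊆ (seq E dim m i).1 := by
  induction j with
  | zero => simp_all
  | succ j ih =>
    rcases Nat.lt_or_ge i (j + 1) with h | h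
    · exact (seq_fst_succ E dim m j).trans (ih (by omega))
    · have : i = j + 1 := le_antisymm hij h
      subst this; exact fun _ hx => hx

/-- At every stage, the current `W` is of the form `Wadd E (current M) _`. -/
lemma seq_snd_shape (E : M → M → Prop) (dim : M → ℕ) (m j : ℕ) :
    ∃ Wp, (seq E dim m j).2 = Wadd E ((seq E dim m j).1) Wp := by
  cases j with
  | zero => exact ⟨_, rfl⟩
  | succ j => exact ⟨_, rfl⟩

/-- The source of any `W`-arrow belongs to `Uof E` of the complex at some stage. -/
lemma seq_src (E : M → M → Prop) (dim : M → ℕ) (m : ℕ) :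
    ∀ j a b, (seq E dim m j).2 a b → ∃ i, i ≤ j ∧ a ∈ Uof E ((seq E dim m i).1) := by
  intro j
  induction j with
  | zero =>
    intro a b h
    rcases h with h | ⟨hU, _, _⟩
    · exact absurd h not_false
    · exact ⟨0, le_rfl, hU⟩
  | succ j ih =>
    intro a b h
    rcases h with h | ⟨hU, _, _⟩
    · obtain ⟨i, hi, hU⟩ := ih a b h
      exact ⟨i, hi.trans (Nat.le_succ j), hU⟩
    · exact ⟨j + 1, le_rfl, hU⟩

/-- If `a` is the source of some `W`-arrow and still belongs to the current complex,
then `W` contains every face relation out of `a` within the current complex. -/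
lemma good_arrows (E : M → M → Prop) (dim : M → ℕ) (m j : ℕ) {a : M}
    (ha : a ∈ (seq E dim m j).1) {b : M} (hb : (seq E dim m j).2 a b) :
    ∀ z ∈ (seq E dim m j).1, a ≤ z → (seq E dim m j).2 a z := by
  obtain ⟨i, hij, hU⟩ := seq_src E dim m j a b hb
  obtain ⟨Wp, hshape⟩ := seq_snd_shape E dim m j
  intro z hz hle
  rw [hshape]
  exact Or.inr ⟨⟨ha, fun ρ hρ hρle => hU.2 ρ (seq_fst_mono E dim m hij hρ) hρle⟩, hz, hle⟩

/-- if `M_{d+1}` is a simplicial subcomplex of `M` of dimension at most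
`d+1`, then `M_d` is a simplicial subcomplex of dimension at most `d`; equivalently,
the deleted set `M_{d+1} − M_d` contains every `(d+1)`-simplex of `M_{d+1}` and is
upward closed in the face poset of `M_{d+1}`. -/
theorem step_subcomplex (B : Bisheaf M) (dim : M → ℕ) (m : ℕ)
    (hstrict : ∀ σ τ : M, σ < τ → dim σ < dim τ)
    (hbound : ∀ σ : M, dim σ ≤ m)
    (d : ℕ) (hd : d < m)
    (hsub : IsLowerSet (Mseq B dim m (d + 1)))
    (hdim : ∀ σ ∈ Mseq B dim m (d + 1), dim σ ≤ d + 1) :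
    IsLowerSet (Mseq B dim m d) ∧
    (∀ σ ∈ Mseq B dim m d, dim σ ≤ d) ∧
    (∀ σ ∈ Mseq B dim m (d + 1), dim σ = d + 1 → σ ∉ Mseq B dim m d) ∧
    (∀ σ σ' : M, σ ∈ Mseq B dim m (d + 1) → σ' ∈ Mseq B dim m (d + 1) → σ ≤ σ' →
      σ ∉ Mseq B dim m d → σ' ∉ Mseq B dim m d) := by
  set j := m - (d + 1) with hjdef
  have hA : Mseq B dim m (d + 1) = (seq B.E dim m j).1 := rfl
  have hMd : Mseq B dim m d = stepM dim (seq B.E dim m j) d := by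
    show (seq B.E dim m (m - d)).1 = _
    have h1 : m - d = j + 1 := by omega
    rw [h1]
    show stepM dim (seq B.E dim m j) (m - (j + 1)) = _
    have h2 : m - (j + 1) = d := by omega
    rw [h2]
  -- Claim 3: every (d+1)-simplex of M_{d+1} is deleted.
  have key3 : ∀ σ ∈ Mseq B dim m (d + 1), dim σ = d + 1 → σ ∉ Mseq B dim m d := by
    intro σ _ hdσ hmem
    rw [hMd] at hmem
    exact hmem.2 ⟨σ, hdσ, ⟨Iso.refl _⟩⟩
  -- Claim 4: the deleted set is upward closed in M_{d+1}.
  have key4 : ∀ σ σ' : M, σ ∈ Mseq B dim m (d + 1) → σ' ∈ Mseq B dim m (d + 1) → σ ≤ σ' →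
      σ ∉ Mseq B dim m d → σ' ∉ Mseq B dim m d := by
    intro σ σ' hσ hσ' hle hnot hmem'
    have hex : ∃ τ, dim τ = d + 1 ∧ isoIn (seq B.E dim m j).2 σ τ := by
      by_contra hne
      exact hnot (by rw [hMd]; exact ⟨hσ, hne⟩)
    obtain ⟨τ, hτd, hiso⟩ := hex
    by_cases hcase : dim σ = d + 1
    · -- σ is itself top-dimensional, hence σ = σ'.
      have hσσ' : σ = σ' := by
        rcases eq_or_lt_of_le hle with h | h
        · exact h
        · exfalso
          have h1 := hstrict σ σ' h
          have h2 := hdim σ' hσ'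
          omega
      exact hnot (hσσ' ▸ hmem')
    · have hσd : dim σ ≤ d := by
        have := hdim σ hσ
        omega
      rcases zig_extract (isoIn_zigzag hiso) with hts | ⟨a, b, hW, haσ⟩
      · -- τ ≤ σ is impossible for dimension reasons.
        rcases eq_or_lt_of_le hts with h | h
        · rw [h] at hτd; omega
        · have := hstrict τ σ h; omega
      · -- a is the source of a W-arrow and a ≤ σ ≤ σ'; so W a σ and W a σ'.
        have haA : a ∈ Mseq B dim m (d + 1) := hsub haσ hσ
        rw [hA] at haA hσ hσ'
        have hWaσ : (seq B.E dim m j).2 a σ := good_arrows B.E dim m j haA hW σ hσ haσ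
        have hWaσ' : (seq B.E dim m j).2 a σ' :=
          good_arrows B.E dim m j haA hW σ' hσ' (haσ.trans hle)
        -- hence σ' ≅ a ≅ σ ≅ τ in the localization
        have ii1 : IsIso ((mp (seq B.E dim m j).2).Q.map (homOfLE haσ)) :=
          (mp (seq B.E dim m j).2).Q_inverts _ hWaσ
        have ii2 : IsIso ((mp (seq B.E dim m j).2).Q.map (homOfLE (haσ.trans hle))) :=
          (mp (seq B.E dim m j).2).Q_inverts _ hWaσ'
        obtain ⟨eτ⟩ := hiso
        rw [hMd] at hmem'
        exact hmem'.2 ⟨τ, hτd,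
          ⟨(asIso ((mp (seq B.E dim m j).2).Q.map (homOfLE (haσ.trans hle)))).symm ≪≫
            asIso ((mp (seq B.E dim m j).2).Q.map (homOfLE haσ)) ≪≫ eτ⟩⟩
  -- Claim 1: M_d is a lower set.
  have key1 : IsLowerSet (Mseq B dim m d) := by
    intro x y hyx hx
    have hxA : x ∈ Mseq B dim m (d + 1) := by
      rw [hMd] at hx
      exact hx.1
    have hyA : y ∈ Mseq B dim m (d + 1) := hsub hyx hxA
    by_contra hy
    exact key4 y x hyA hxA hyx hy hx
  -- Claim 2: M_d has dimension at most d.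
  have key2 : ∀ σ ∈ Mseq B dim m d, dim σ ≤ d := by
    intro σ hσ
    have hσA : σ ∈ Mseq B dim m (d + 1) := by
      rw [hMd] at hσ
      exact hσ.1
    have h1 := hdim σ hσA
    by_contra h
    exact key3 σ hσA (by omega) hσ
  exact ⟨key1, key2, key3, key4⟩
end

section
/- For each d ∈ {0,1,…,m}, there is no morphism in the localization Fc_{W_d}(M) from any simplex σ ∈ M − M_d to any simplex τ ∈ M_d. -/
open CategoryTheory

variable {M : Type} [PartialOrder M]

section Auxiliary

variable {M : Type} [PartialOrder M]

lemma isoIn_refl (W : M → M → Prop) (σ : M) : isoIn W σ σ := ⟨Iso.refl _⟩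

lemma isoIn_symm {W : M → M → Prop} {σ τ : M} (h : isoIn W σ τ) : isoIn W τ σ :=
  ⟨h.some.symm⟩

lemma isoIn_trans {W : M → M → Prop} {σ τ ρ : M} (h₁ : isoIn W σ τ) (h₂ : isoIn W τ ρ) :
    isoIn W σ ρ := ⟨h₁.some.trans h₂.some⟩

lemma isoIn_of_W {W : M → M → Prop} {σ τ : M} (hle : σ ≤ τ) (hw : W σ τ) : isoIn W σ τ :=
  ⟨Localization.Construction.wIso (homOfLE hle) (show W σ τ from hw)⟩

/-- Transfer a morphism of the localization through a preorder-valued functor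
inverting `W`. -/
lemma hom_transfer {P : Type} [Preorder P] {W : M → M → Prop} (F : M ⥤ P)
    (hF : (mp W).IsInvertedBy F) {σ τ : M}
    (f : (mp W).Q.obj σ ⟶ (mp W).Q.obj τ) : F.obj σ ≤ F.obj τ := by
  let L := Localization.Construction.lift F hF
  have hσ : L.obj ((mp W).Q.obj σ) = F.obj σ :=
    Functor.congr_obj (Localization.Construction.fac F hF) σ
  have hτ : L.obj ((mp W).Q.obj τ) = F.obj τ :=
    Functor.congr_obj (Localization.Construction.fac F hF) τ
  exact leOfHom (eqToHom hσ.symm ≫ L.map f ≫ eqToHom hτ)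

lemma iso_transfer {P : Type} [Preorder P] {W : M → M → Prop} (F : M ⥤ P)
    (hF : (mp W).IsInvertedBy F) {σ τ : M} (h : isoIn W σ τ) :
    F.obj σ ≤ F.obj τ ∧ F.obj τ ≤ F.obj σ :=
  ⟨hom_transfer F hF h.some.hom, hom_transfer F hF h.some.inv⟩

variable (E : M → M → Prop) (dim : M → ℕ) (m : ℕ)

lemma seq_W_le : ∀ j, ∀ σ τ : M, (seq E dim m j).2 σ τ → σ ≤ τ := by
  intro j
  induction j with
  | zero =>
    rintro σ τ (h | ⟨_, _, h⟩)
    · exact absurd h not_false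
    · exact h
  | succ j ih =>
    rintro σ τ (h | ⟨_, _, h⟩)
    · exact ih σ τ h
    · exact h

lemma seq_A_antitone : ∀ j, ∀ σ : M, σ ∈ (seq E dim m (j+1)).1 → σ ∈ (seq E dim m j).1 :=
  fun _ _ h => h.1

/-- The star property: a `W`-arrow out of `σ` spreads to every coface of `σ` that is
still present in the current complex. -/
lemma seq_star : ∀ j, ∀ σ τ τ' : M, (seq E dim m j).2 σ τ → σ ≤ τ' →
    τ' ∈ (seq E dim m j).1 → (seq E dim m j).2 σ τ' := by
  intro j
  induction j with
  | zero =>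
    rintro σ τ τ' (h | ⟨hU, _, _⟩) hle hτ'
    · exact absurd h not_false
    · exact Or.inr ⟨hU, Set.mem_univ _, hle⟩
  | succ j ih =>
    rintro σ τ τ' (h | ⟨hU, _, _⟩) hle hτ'
    · exact Or.inl (ih σ τ τ' h hle hτ'.1)
    · exact Or.inr ⟨hU, hτ', hle⟩

/-- The main induction: dimension bound, invariance of membership along `W`-arrows,
and downward closure of the complexes of the iterative construction. -/
lemma seq_main (hstrict : ∀ σ τ : M, σ < τ → dim σ < dim τ)
    (hbound : ∀ σ : M, dim σ ≤ m) :
    ∀ j, j ≤ m →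
      (∀ σ : M, σ ∈ (seq E dim m j).1 → dim σ ≤ m - j) ∧
      (∀ σ τ : M, (seq E dim m j).2 σ τ →
        (σ ∈ (seq E dim m j).1 ↔ τ ∈ (seq E dim m j).1)) ∧
      (∀ σ τ : M, σ ≤ τ → τ ∈ (seq E dim m j).1 → σ ∈ (seq E dim m j).1) := by
  intro j
  induction j with
  | zero =>
    intro _
    refine ⟨fun σ _ => by simpa using hbound σ, ?_, ?_⟩
    · intro σ τ _
      simp [seq]
    · intro σ τ _ _
      simp [seq]
  | succ j ih =>
    intro hjm
    obtain ⟨ih1, ih2, ih3⟩ := ih (Nat.le_of_succ_le hjm)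
    have hd1 : m - (j + 1) + 1 = m - j := by omega
    -- membership in the new complex, unfolded
    have hmem : ∀ σ : M, σ ∈ (seq E dim m (j+1)).1 ↔
        σ ∈ (seq E dim m j).1 ∧
          ¬ ∃ τ : M, dim τ = m - (j + 1) + 1 ∧ isoIn (seq E dim m j).2 σ τ :=
      fun σ => Iff.rfl
    -- (i) the dimension bound
    have h1 : ∀ σ : M, σ ∈ (seq E dim m (j+1)).1 → dim σ ≤ m - (j+1) := by
      intro σ hσ
      obtain ⟨hσA, hσn⟩ := (hmem σ).1 hσ
      rcases lt_or_eq_of_le (ih1 σ hσA) with h | h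
      · omega
      · exact absurd ⟨σ, by omega, isoIn_refl _ σ⟩ hσn
    refine ⟨h1, ?_, ?_⟩
    -- (ii) membership is invariant along W-arrows
    · rintro σ τ (hw | ⟨hU, hτ, _⟩)
      · have hiso : isoIn (seq E dim m j).2 σ τ :=
          isoIn_of_W (seq_W_le E dim m j σ τ hw) hw
        have hAiff := ih2 σ τ hw
        rw [hmem, hmem]
        constructor
        · rintro ⟨ha, hb⟩
          refine ⟨hAiff.mp ha, ?_⟩
          rintro ⟨ρ, hρ, hi⟩
          exact hb ⟨ρ, hρ, isoIn_trans hiso hi⟩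
        · rintro ⟨ha, hb⟩
          refine ⟨hAiff.mpr ha, ?_⟩
          rintro ⟨ρ, hρ, hi⟩
          exact hb ⟨ρ, hρ, isoIn_trans (isoIn_symm hiso) hi⟩
      · exact iff_of_true hU.1 hτ
    -- (iii) downward closure
    · intro σ τ hle hτ
      have hσA : σ ∈ (seq E dim m j).1 := ih3 σ τ hle hτ.1
      refine (hmem σ).2 ⟨hσA, ?_⟩
      rintro ⟨ρ, hdρ, hiso⟩
      by_cases hs : ∃ u x : M, u ≤ σ ∧ (seq E dim m j).2 u x
      · -- some W-arrow starts below σ; spread it to σ and τ by the star property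
        obtain ⟨u, x, hu, hw⟩ := hs
        have hwσ : (seq E dim m j).2 u σ := seq_star E dim m j u x σ hw hu hσA
        have hwτ : (seq E dim m j).2 u τ := seq_star E dim m j u x τ hw (hu.trans hle) hτ.1
        have hiτ : isoIn (seq E dim m j).2 τ ρ :=
          isoIn_trans
            (isoIn_trans (isoIn_symm (isoIn_of_W (seq_W_le E dim m j u τ hwτ) hwτ))
              (isoIn_of_W (seq_W_le E dim m j u σ hwσ) hwσ)) hiso
        exact hτ.2 ⟨ρ, hdρ, hiτ⟩
      · -- no W-arrow starts below σ: the down-set of σ is rigid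
        push_neg at hs
        -- functor to the order-dual of Prop, recording membership in the down-set of σ
        let F : M ⥤ Propᵒᵈ :=
          { obj := fun x => OrderDual.toDual (x ≤ σ)
            map := fun {x y} f =>
              homOfLE (show ((y ≤ σ) : Prop) ≤ ((x ≤ σ) : Prop) from
                fun h => le_trans (leOfHom f) h)
            map_id := fun _ => Subsingleton.elim _ _
            map_comp := fun _ _ => Subsingleton.elim _ _ }
        have hF : (mp (seq E dim m j).2).IsInvertedBy F := by
          intro x y f hf
          refine ⟨homOfLE (show ((x ≤ σ) : Prop) ≤ ((y ≤ σ) : Prop) from ?_),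
            Subsingleton.elim _ _, Subsingleton.elim _ _⟩
          intro hx
          exact absurd hf (hs x y hx)
        have hρσ : ρ ≤ σ := by
          have := (iso_transfer F hF hiso).2
          have h2 : ((σ ≤ σ) : Prop) ≤ ((ρ ≤ σ) : Prop) := this
          exact h2 (le_refl σ)
        rcases lt_or_eq_of_le hρσ with h | h
        · -- ρ < σ contradicts the dimension bound on σ
          have := hstrict ρ σ h
          have := ih1 σ hσA
          omega
        · -- ρ = σ, so dim σ = m - j; compare with τ
          rcases lt_or_eq_of_le hle with h' | h'
          · have := hstrict σ τ h'
            have := h1 τ hτ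
            have : dim ρ ≤ dim σ := le_of_eq (congrArg dim h)
            omega
          · exact hτ.2 ⟨ρ, hdρ, h' ▸ hiso⟩

end Auxiliary

/-- for each `d ∈ {0,…,m}` there is no morphism in the localization
`Fc_{W_d}(M)` from any simplex `σ ∈ M − M_d` to any simplex `τ ∈ M_d`. -/
theorem no_morphism_into_Md (B : Bisheaf M) (dim : M → ℕ) (m : ℕ)
    (hstrict : ∀ σ τ : M, σ < τ → dim σ < dim τ)
    (hbound : ∀ σ : M, dim σ ≤ m)
    (d : ℕ) (hd : d ≤ m)
    {σ τ : M} (hσ : σ ∉ Mseq B dim m d) (hτ : τ ∈ Mseq B dim m d) :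
    IsEmpty ((mp (Wseq B dim m d)).Q.obj σ ⟶ (mp (Wseq B dim m d)).Q.obj τ) := by
  classical
  obtain ⟨h1, h2, h3⟩ := seq_main B.E dim m hstrict hbound (m - d) (Nat.sub_le m d)
  constructor
  intro f
  -- functor to Prop recording *non*-membership in `M_d`
  let G : M ⥤ Prop :=
    { obj := fun x => x ∉ (seq B.E dim m (m - d)).1
      map := fun {x y} g =>
        homOfLE (show ((x ∉ (seq B.E dim m (m - d)).1) : Prop) ≤
            ((y ∉ (seq B.E dim m (m - d)).1) : Prop) from
          fun hx hy => hx (h3 x y (leOfHom g) hy))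
      map_id := fun _ => Subsingleton.elim _ _
      map_comp := fun _ _ => Subsingleton.elim _ _ }
  have hG : (mp (Wseq B dim m d)).IsInvertedBy G := by
    intro x y g hg
    refine ⟨homOfLE (show ((y ∉ (seq B.E dim m (m - d)).1) : Prop) ≤
        ((x ∉ (seq B.E dim m (m - d)).1) : Prop) from ?_),
      Subsingleton.elim _ _, Subsingleton.elim _ _⟩
    intro hy hx
    exact hy ((h2 x y hg).mp hx)
  have hle : ((σ ∉ (seq B.E dim m (m - d)).1) : Prop) ≤
      ((τ ∉ (seq B.E dim m (m - d)).1) : Prop) := hom_transfer G hG f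
  exact hle hσ hτ
end

section
/- Let W be a closed collection of face relations in the face poset of a simplicial complex M, and suppose every relation in W has the form (σ ≤ τ) with σ ∈ U for some upward-closed set of simplices U such that all face relations out of members of U lie in W. If ζ is a W-zigzag from σ to τ whose underlying simplices after the first all lie in the open star of some member of U, and the first forward relation in ζ is an equality, then ζ represents an isomorphism in Fc_W(M). -/
open CategoryTheory

variable {M : Type} [PartialOrder M]

/-- The set of simplices appearing in a zigzag. -/
def Zig.verts {W : M → M → Prop} : ∀ {σ τ : M}, Zig W σ τ → Set M
  | _, _, .nil a => {a}
  | _, _, .fwd (σ := a) _ rest => insert a rest.verts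
  | _, _, .bwd (σ := a) _ _ rest => insert a rest.verts

lemma backHom_isIso (W : M → M → Prop) {a b : M} (h : a ≤ b) (hw : W a b ∨ a = b) :
    IsIso (backHom W h hw) := by
  unfold backHom
  split_ifs with hab
  · have : IsIso ((mp W).Q.map (homOfLE h)) := (mp W).Q_inverts _ hab
    infer_instance
  · obtain e := hw.resolve_left hab
    subst e
    rw [Subsingleton.elim (homOfLE (le_of_eq (Eq.symm rfl))) (𝟙 a),
      CategoryTheory.Functor.map_id]
    infer_instance

lemma eval_isIso (W : M → M → Prop) (U : Set M)
    (hUup : ∀ σ σ' : M, σ ∈ U → σ ≤ σ' → σ' ∈ U)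
    (hUW : ∀ σ τ : M, σ ∈ U → σ ≤ τ → W σ τ)
    {σ τ : M} (z : Zig W σ τ)
    (hverts : ∀ ρ ∈ z.verts, ∃ u ∈ U, u ≤ ρ) : IsIso z.eval := by
  induction z with
  | nil a =>
    simp only [Zig.eval]; infer_instance
  | fwd h rest ih =>
    rename_i a b c
    obtain ⟨u, hu, hle⟩ := hverts a (Set.mem_insert _ _)
    have haU : a ∈ U := hUup u a hu hle
    have hW : W a b := hUW a b haU h
    have h1 : IsIso ((mp W).Q.map (homOfLE h)) := (mp W).Q_inverts _ hW
    have h2 : IsIso rest.eval := ih fun ρ hρ => hverts ρ (Set.mem_insert_of_mem _ hρ)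
    simp only [Zig.eval]
    infer_instance
  | bwd h hw rest ih =>
    have h1 : IsIso (backHom W h hw) := backHom_isIso W h hw
    have h2 : IsIso rest.eval := ih fun ρ hρ => hverts ρ (Set.mem_insert_of_mem _ hρ)
    simp only [Zig.eval]
    infer_instance

/-- let `W` be a closed collection of face relations all of the form
`(σ ≤ τ)` with `σ ∈ U`, for an upward-closed set `U` of simplices such that all face
relations out of members of `U` lie in `W`.  If `ζ` is a `W`-zigzag from `σ` to `τ`
whose underlying simplices after the first all lie in the open star of some member
of `U`, and the first forward relation of `ζ` is an equality, then `ζ` represents an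
isomorphism in the localization `Fc_W(M)`. -/
theorem reduced_star_zigzag_iso (W : M → M → Prop) (U : Set M)
    (hface : ∀ σ τ, W σ τ → σ ≤ τ)
    (hclosed : ∀ σ τ ν, W σ τ → W τ ν → W σ ν)
    (hWU : ∀ σ τ, W σ τ → σ ∈ U)
    (hUup : ∀ σ σ' : M, σ ∈ U → σ ≤ σ' → σ' ∈ U)
    (hUW : ∀ σ τ : M, σ ∈ U → σ ≤ τ → W σ τ)
    {σ τ : M} (rest : Zig W σ τ)
    (hverts : ∀ ρ ∈ rest.verts, ∃ u ∈ U, u ≤ ρ) :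
    IsIso (Zig.fwd (le_refl σ) rest).eval := by
  have : IsIso rest.eval := eval_isIso W U hUup hUW rest hverts
  simp only [Zig.eval, homOfLE_refl, CategoryTheory.Functor.map_id]
  infer_instance
end
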